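/- For λ > 0, define κ_n = n · (Σ_{j≥n+1} λ^j/j!)/(Σ_{j≥n} λ^j/j!). Then κ_1 = λ + 1 - λe^λ/(e^λ - 1) and κ_n = n + λ - (n-1)λ/κ_{n-1} for all n ≥ 2. -/

import Mathlib

open Real

theorem stmt_7 (lam : ℝ) (hlam : 0 < lam)
    (S : ℕ → ℝ) (hS : ∀ n, S n = ∑' j : ℕ, lam ^ (j + n) / Nat.factorial (j + n))
    (κ : ℕ → ℝ) (hκ : ∀ n : ℕ, 1 ≤ n → κ n = n * S (n + 1) / S n) :
    κ 1 = lam + 1 - lam * exp lam / (exp lam - 1) ∧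
      ∀ n : ℕ, 2 ≤ n → κ n = n + lam - (n - 1) * lam / κ (n - 1) := by
  have hsum : ∀ n : ℕ, Summable (fun j : ℕ => lam ^ (j + n) / Nat.factorial (j + n)) := by
    intro n
    exact ((summable_nat_add_iff n).2 (Real.summable_pow_div_factorial lam))
  have hSpos : ∀ n, 0 < S n := by
    intro n
    rw [hS n]
    refine Summable.tsum_pos (hsum n) (fun i => by positivity) 0 (by positivity)
  have hrec : ∀ n : ℕ, S n = lam ^ n / Nat.factorial n + S (n + 1) := by
    intro n
    rw [hS n, hS (n + 1), Summable.tsum_eq_zero_add (hsum n)]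
    congr 1
    · simp
    · refine tsum_congr fun j => ?_
      have h : j + 1 + n = j + (n + 1) := by omega
      rw [h]
  have hS0 : S 0 = exp lam := by
    rw [hS 0, Real.exp_eq_exp_ℝ, NormedSpace.exp_eq_tsum_div]
    simp
  have hS1 : S 1 = exp lam - 1 := by
    have := hrec 0
    rw [hS0] at this
    simp at this
    linarith
  constructor
  · have h2 : S 2 = exp lam - 1 - lam := by
      have := hrec 1
      rw [hS1] at this
      simp at this
      linarith
    have hne : exp lam - 1 ≠ 0 := by
      have := Real.add_one_lt_exp (ne_of_gt hlam)
      intro h; nlinarith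
    rw [hκ 1 le_rfl, hS1, h2]
    field_simp
    ring
  · intro n hn
    have h1 : 1 ≤ n - 1 := by omega
    have hn1 : n - 1 + 1 = n := by omega
    have hkey : (n : ℝ) * S (n + 1) = (n + lam) * S n - lam * S (n - 1) := by
      have e1 := hrec n
      have e2 := hrec (n - 1)
      rw [hn1] at e2
      have hfacn : Nat.factorial n = n * Nat.factorial (n - 1) := by
        conv_lhs => rw [← hn1]
        rw [Nat.factorial_succ, hn1]
      have hfac : (Nat.factorial n : ℝ) = n * Nat.factorial (n - 1) := by
        exact_mod_cast congrArg (Nat.cast : ℕ → ℝ) hfacn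
      have hpow : lam ^ n = lam * lam ^ (n - 1) := by
        rw [← pow_succ', Nat.sub_add_cancel (by omega)]
      have hfacpos : (0:ℝ) < Nat.factorial (n - 1) := by positivity
      have hnpos : (0:ℝ) < (n:ℝ) := by exact_mod_cast Nat.pos_of_ne_zero (by omega)
      have e1' : (n:ℝ) * S n = lam * lam ^ (n - 1) / (Nat.factorial (n - 1) : ℝ) + n * S (n + 1) := by
        rw [e1, hfac, hpow]
        field_simp
      linear_combination (-1 : ℝ) * e1' + lam * e2
    have hcast : ((n - 1 : ℕ) : ℝ) = (n : ℝ) - 1 := by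
      push_cast [Nat.cast_sub (by omega : 1 ≤ n)]; ring
    rw [hκ n (by omega), hκ (n - 1) h1, hn1, hcast]
    have hSn := (hSpos n).ne'
    have hSn1 := (hSpos (n - 1)).ne'
    have hn1pos : (0:ℝ) < (n:ℝ) - 1 := by
      have : (2:ℝ) ≤ n := by exact_mod_cast hn
      linarith
    have hdiv : ((n:ℝ) - 1) * lam / (((n:ℝ) - 1) * S n / S (n - 1)) = lam * S (n - 1) / S n := by
      rw [div_div_eq_mul_div]
      rw [div_eq_div_iff (by positivity) hSn]
      ring
    rw [hdiv, div_eq_iff hSn, sub_mul, div_mul_cancel₀ _ hSn]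
    linarith [hkey]
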